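/- Let Ω ⊆ ℝ^d be open, let ψ : Ω → Ω be continuous, injective and strongly run-away, let K ⊆ Ω be a nonempty compact set, let ρ > 0 be such that the compact set L := {x ∈ ℝ^d : dist(x, K) ≤ ρ} is contained in Ω, and let N ≥ 1 be such that ψ_n(L) ∩ L = ∅ for every n ≥ N. For k ∈ ℤ define L_k := ψ_{kN}(L) if k ≥ 0 and L_k := (ψ_{−kN})^{−1}(L) if k < 0. Then: (a) the interior of ⋃_{k∈ℤ} L_k equals ⋃_{k∈ℤ} interior(L_k); (b) the set ⋃_{k∈ℤ} L_k is closed in the subspace topology of Ω; and (c) the boundary of ⋃_{k∈ℤ} L_k relative to Ω equals ⋃_{k∈ℤ} of the boundaries of L_k relative to Ω. -/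

import Mathlib

theorem aux_lf {X : Type*} [TopologicalSpace X] {f : ℤ → Set X}
    (hcl : ∀ k, IsClosed (f k)) (hdisj : Pairwise (Function.onFun Disjoint f))
    (hlf : LocallyFinite f) :
    interior (⋃ k, f k) = ⋃ k, interior (f k)
    ∧ IsClosed (⋃ k, f k)
    ∧ frontier (⋃ k, f k) = ⋃ k, frontier (f k) := by
  have hclosedU : IsClosed (⋃ k, f k) := hlf.isClosed_iUnion hcl
  have hint : interior (⋃ k, f k) = ⋃ k, interior (f k) := by
    apply Set.Subset.antisymm
    · intro x hx
      obtain ⟨j, hj⟩ : ∃ j, x ∈ f j := by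
        simpa using interior_subset hx
      obtain ⟨t, ht, hF⟩ := hlf x
      set U : Set X := (interior (⋃ k, f k) ∩ interior t) \ ⋃ i ∈ {i | (f i ∩ t).Nonempty} \ {j}, f i with hU
      have hUopen : IsOpen U := by
        apply IsOpen.sdiff (isOpen_interior.inter isOpen_interior)
        exact hF.diff.isClosed_biUnion fun i _ => hcl i
      have hxU : x ∈ U := by
        refine ⟨⟨hx, mem_interior_iff_mem_nhds.2 ht⟩, ?_⟩
        simp only [Set.mem_iUnion, not_exists]
        rintro i ⟨-, hij⟩ hxi
        exact (hdisj (fun h => hij (by simp [h]))).le_bot ⟨hxi, hj⟩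
      have hUsub : U ⊆ f j := by
        rintro y ⟨⟨hy1, hy2⟩, hy3⟩
        obtain ⟨i, hi⟩ : ∃ i, y ∈ f i := by simpa using interior_subset hy1
        rcases eq_or_ne i j with rfl | hij
        · exact hi
        · have : i ∈ {i | (f i ∩ t).Nonempty} \ {j} := ⟨⟨y, hi, interior_subset hy2⟩, by simpa using hij⟩
          exact absurd (Set.mem_biUnion this hi) hy3
      exact Set.mem_iUnion.2 ⟨j, mem_interior.2 ⟨U, hUsub, hUopen, hxU⟩⟩
    · exact Set.iUnion_subset fun k => interior_mono (Set.subset_iUnion f k)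
  refine ⟨hint, hclosedU, ?_⟩
  have hfr : ∀ k, frontier (f k) = f k \ interior (f k) := fun k => by
    rw [frontier, (hcl k).closure_eq]
  rw [frontier, hclosedU.closure_eq, hint]
  ext x
  simp only [Set.mem_diff, Set.mem_iUnion, hfr, not_exists]
  constructor
  · rintro ⟨⟨k, hk⟩, hni⟩
    exact ⟨k, hk, hni k⟩
  · rintro ⟨k, hk, hnk⟩
    refine ⟨⟨k, hk⟩, fun j hj => ?_⟩
    rcases eq_or_ne j k with rfl | hjk
    · exact hnk hj
    · exact (hdisj hjk).le_bot ⟨interior_subset hj, hk⟩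

/-- The sets `L_k` built from iterating a strongly run-away map: `L_k := ψ_{kN}(L)` for
`k ≥ 0` and `L_k := (ψ_{−kN})^{−1}(L)` for `k < 0`. -/
def stmtLk {d : ℕ} {Ω : Set (Fin d → ℝ)} (ψ : ↥Ω → ↥Ω) (L : Set ↥Ω) (N : ℕ) (k : ℤ) :
    Set ↥Ω :=
  if 0 ≤ k then ψ^[k.toNat * N] '' L else ψ^[(-k).toNat * N] ⁻¹' L

/-- (a) the interior of `⋃ L_k` is the union of the interiors; (b) `⋃ L_k` is closed in `Ω`;
(c) the boundary of `⋃ L_k` relative to `Ω` is the union of the boundaries. -/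
theorem stmt_11 {d : ℕ} (Ω : Set (Fin d → ℝ)) (hΩ : IsOpen Ω)
    (ψ : ↥Ω → ↥Ω) (hcont : Continuous ψ) (hinj : Function.Injective ψ)
    (hsra : ∀ K : Set ↥Ω, IsCompact K → ∃ N : ℕ, ∀ n, N ≤ n → (ψ^[n] '' K) ∩ K = ∅)
    (K : Set (Fin d → ℝ)) (hKne : K.Nonempty) (hK : IsCompact K)
    (ρ : ℝ) (hρ : 0 < ρ)
    (hsub : {x : Fin d → ℝ | Metric.infDist x K ≤ ρ} ⊆ Ω)
    (L : Set ↥Ω) (hLdef : L = {x : ↥Ω | Metric.infDist (x : Fin d → ℝ) K ≤ ρ})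
    (N : ℕ) (hN : 1 ≤ N)
    (hrun : ∀ n : ℕ, N ≤ n → (ψ^[n] '' L) ∩ L = ∅) :
    interior (⋃ k : ℤ, stmtLk ψ L N k) = ⋃ k : ℤ, interior (stmtLk ψ L N k)
    ∧ IsClosed (⋃ k : ℤ, stmtLk ψ L N k)
    ∧ frontier (⋃ k : ℤ, stmtLk ψ L N k) = ⋃ k : ℤ, frontier (stmtLk ψ L N k) := by
  classical
  set C : Set (Fin d → ℝ) := {x : Fin d → ℝ | Metric.infDist x K ≤ ρ} with hC
  -- `C` is compact
  have hCeq : C = Metric.cthickening ρ K := by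
    ext x
    rw [Metric.mem_cthickening_iff]
    have hne : EMetric.infEdist x K ≠ ⊤ := Metric.infEdist_ne_top hKne
    constructor
    · intro h
      exact (ENNReal.le_ofReal_iff_toReal_le hne hρ.le).2 h
    · intro h
      have := ENNReal.toReal_mono ENNReal.ofReal_ne_top h
      rwa [ENNReal.toReal_ofReal hρ.le] at this
  have hCcomp : IsCompact C := hCeq ▸ hK.cthickening
  -- `L` is the preimage of `C`
  have hLpre : L = Subtype.val ⁻¹' C := by rw [hLdef]; rfl
  have hLimg : Subtype.val '' L = C := by
    rw [hLpre, Subtype.image_preimage_coe]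
    exact Set.inter_eq_right.2 hsub
  have hLcomp : IsCompact L := by
    rw [Topology.IsEmbedding.subtypeVal.isCompact_iff, hLimg]
    exact hCcomp
  have hLclosed : IsClosed L := by
    rw [hLpre]
    exact (hCeq ▸ Metric.isClosed_cthickening).preimage continuous_subtype_val
  -- the key non-return property
  have hkey : ∀ m : ℕ, N ≤ m → ∀ v ∈ L, ψ^[m] v ∉ L := by
    intro m hm v hv hmem
    have := hrun m hm
    rw [Set.eq_empty_iff_forall_notMem] at this
    exact this (ψ^[m] v) ⟨⟨v, hv, rfl⟩, hmem⟩
  set f : ℤ → Set ↥Ω := stmtLk ψ L N with hf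
  -- closedness of each `f k`
  have hcl : ∀ k, IsClosed (f k) := by
    intro k
    rcases le_or_gt 0 k with hk | hk
    · have : f k = ψ^[k.toNat * N] '' L := by simp [hf, stmtLk, hk]
      rw [this]
      exact (hLcomp.image (hcont.iterate _)).isClosed
    · have : f k = ψ^[(-k).toNat * N] ⁻¹' L := by simp [hf, stmtLk, not_le.2 hk]
      rw [this]
      exact hLclosed.preimage (hcont.iterate _)
  -- pairwise disjointness
  have hdisj' : ∀ j k : ℤ, j < k → Disjoint (f j) (f k) := by
    intro j k hjk
    rw [Set.disjoint_left]
    rcases le_or_gt 0 j with hj | hj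
    · have hk : 0 ≤ k := le_trans hj hjk.le
      have hfj : f j = ψ^[j.toNat * N] '' L := by simp [hf, stmtLk, hj]
      have hfk : f k = ψ^[k.toNat * N] '' L := by simp [hf, stmtLk, hk]
      rw [hfj, hfk]
      rintro x ⟨u, hu, rfl⟩ ⟨v, hv, hv2⟩
      have htn : j.toNat < k.toNat := by omega
      have hsum : k.toNat * N = j.toNat * N + (k.toNat - j.toNat) * N := by
        rw [← Nat.add_mul]; congr 1; omega
      rw [hsum, Function.iterate_add_apply] at hv2
      have := (hinj.iterate (j.toNat * N)) hv2
      rw [← this] at hu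
      exact hkey _ (Nat.le_mul_of_pos_left N (show 0 < k.toNat - j.toNat by omega)) v hv hu
    · rcases le_or_gt 0 k with hk | hk
      · have hfj : f j = ψ^[(-j).toNat * N] ⁻¹' L := by simp [hf, stmtLk, not_le.2 hj]
        have hfk : f k = ψ^[k.toNat * N] '' L := by simp [hf, stmtLk, hk]
        rw [hfj, hfk]
        rintro x hx ⟨v, hv, rfl⟩
        rw [Set.mem_preimage, ← Function.iterate_add_apply] at hx
        exact hkey _ (le_trans (Nat.le_mul_of_pos_left N (show 0 < (-j).toNat by omega)) (Nat.le_add_right _ _)) v hv hx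
      · have hfj : f j = ψ^[(-j).toNat * N] ⁻¹' L := by simp [hf, stmtLk, not_le.2 hj]
        have hfk : f k = ψ^[(-k).toNat * N] ⁻¹' L := by simp [hf, stmtLk, not_le.2 hk]
        rw [hfj, hfk]
        rintro x hx1 hx2
        rw [Set.mem_preimage] at hx1 hx2
        have hsum : (-j).toNat * N = ((-j).toNat - (-k).toNat) * N + (-k).toNat * N := by
          rw [← Nat.add_mul]; congr 1; omega
        rw [hsum, Function.iterate_add_apply] at hx1
        exact hkey _ (Nat.le_mul_of_pos_left N (show 0 < (-j).toNat - (-k).toNat by omega)) _ hx2 hx1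
  have hdisj : Pairwise (Function.onFun Disjoint f) := by
    intro j k hjk
    rcases lt_or_gt_of_ne hjk with h | h
    · exact hdisj' _ _ h
    · exact (hdisj' _ _ h).symm
  -- local finiteness
  haveI : LocallyCompactSpace ↥Ω := hΩ.locallyCompactSpace
  have hlf : LocallyFinite f := by
    intro x
    obtain ⟨Cx, hCxcomp, hCxnhds⟩ := exists_compact_mem_nhds x
    obtain ⟨M, hM⟩ := hsra (Cx ∪ L) (hCxcomp.union hLcomp)
    refine ⟨Cx, hCxnhds, (Set.finite_Icc (-(M : ℤ)) M).subset ?_⟩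
    rintro k ⟨x0, hx0f, hx0C⟩
    have hlt : ∀ m : ℕ, (ψ^[m] x0 ∈ L ∨ (∃ v ∈ L, ψ^[m] v = x0)) → m < M := by
      intro m hm
      by_contra hge
      push_neg at hge
      have hemp := hM m hge
      rw [Set.eq_empty_iff_forall_notMem] at hemp
      rcases hm with h | ⟨v, hv, hveq⟩
      · exact hemp (ψ^[m] x0) ⟨⟨x0, Or.inl hx0C, rfl⟩, Or.inr h⟩
      · exact hemp x0 ⟨⟨v, Or.inr hv, hveq⟩, Or.inl hx0C⟩
    rcases le_or_gt 0 k with hk | hk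
    · have hfk : f k = ψ^[k.toNat * N] '' L := by simp [hf, stmtLk, hk]
      rw [hfk] at hx0f
      obtain ⟨v, hv, hveq⟩ := hx0f
      have hmlt := hlt (k.toNat * N) (Or.inr ⟨v, hv, hveq⟩)
      have : k.toNat ≤ k.toNat * N := Nat.le_mul_of_pos_right _ (by omega)
      constructor <;> omega
    · have hfk : f k = ψ^[(-k).toNat * N] ⁻¹' L := by simp [hf, stmtLk, not_le.2 hk]
      rw [hfk] at hx0f
      have hmlt := hlt ((-k).toNat * N) (Or.inl hx0f)
      have : (-k).toNat ≤ (-k).toNat * N := Nat.le_mul_of_pos_right _ (by omega)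
      constructor <;> omega
  exact aux_lf hcl hdisj hlf
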